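/- arXiv:2107.12840 — 2 statements merged into one kernel-verified Lean document; each statement's English description precedes it below -/
import Mathlib

section
/- Suppose f : ℝ → ℝ satisfies f(x) ≥ 0 and |f''''(x)| ≤ 1 for all x ∈ ℝ. Then |f'''(x)| ≤ 8 f(x)^{1/4} + 8 |f''(x)|^{1/2} for all x ∈ ℝ. -/
open Set

private lemma idW_eq {f : ℝ → ℝ} (hf : ContDiff ℝ 4 f) {s : Set ℝ} (hs : UniqueDiffOn ℝ s)
    {x : ℝ} (hx : x ∈ s) (m : ℕ) (hm : m ≤ 4) :
    iteratedDerivWithin m f s x = iteratedDeriv m f x := by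
  have h := ((contDiff_iff_ftaylorSeries.mp hf).hasFTaylorSeriesUpToOn
      s).eq_iteratedFDerivWithin_of_uniqueDiffOn (by exact_mod_cast hm) hs hx
  rw [iteratedDerivWithin_eq_iteratedFDerivWithin, iteratedDeriv_eq_iteratedFDeriv, ← h]
  rfl

private lemma taylor4 {f : ℝ → ℝ} (hf : ContDiff ℝ 4 f)
    (h4 : ∀ x, |iteratedDeriv 4 f x| ≤ 1) (x t : ℝ) (ht : 0 ≤ t) :
    |f (x + t) - (f x + iteratedDeriv 1 f x * t + iteratedDeriv 2 f x * t ^ 2 / 2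
      + iteratedDeriv 3 f x * t ^ 3 / 6)| ≤ t ^ 4 / 6 := by
  rcases eq_or_lt_of_le ht with h | ht'
  · simp [← h]
  have hab : x ≤ x + t := by linarith
  have hud : UniqueDiffOn ℝ (Icc x (x + t)) := uniqueDiffOn_Icc (by linarith)
  have hx0 : x ∈ Icc x (x + t) := left_mem_Icc.mpr hab
  have hbd := taylor_mean_remainder_bound (f := f) (a := x) (b := x + t) (C := 1) (n := 3)
    (x := x + t) hab (hf.contDiffOn) (right_mem_Icc.mpr hab) ?_
  · have heq : taylorWithinEval f 3 (Icc x (x + t)) x (x + t)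
        = f x + iteratedDeriv 1 f x * t + iteratedDeriv 2 f x * t ^ 2 / 2
          + iteratedDeriv 3 f x * t ^ 3 / 6 := by
      rw [show (3 : ℕ) = 2 + 1 from rfl, taylorWithinEval_succ,
        show (2 : ℕ) = 1 + 1 from rfl, taylorWithinEval_succ,
        taylorWithinEval_succ (n := 0), taylor_within_zero_eval,
        idW_eq hf hud hx0 1 (by norm_num), idW_eq hf hud hx0 2 (by norm_num),
        idW_eq hf hud hx0 3 (by norm_num)]
      simp [smul_eq_mul]
      ring
    rw [heq, Real.norm_eq_abs] at hbd
    refine hbd.trans (le_of_eq ?_)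
    have hxt : x + t - x = t := by ring
    rw [hxt]
    norm_num [Nat.factorial]
  · intro y hy
    show ‖iteratedDerivWithin 4 f (Icc x (x + t)) y‖ ≤ 1
    rw [Real.norm_eq_abs, idW_eq hf hud hy 4 le_rfl]
    exact h4 y

private lemma key_bound {f : ℝ → ℝ} (hf : ContDiff ℝ 4 f) (h0 : ∀ x, 0 ≤ f x)
    (h4 : ∀ x, |iteratedDeriv 4 f x| ≤ 1) (x t : ℝ) (ht : 0 ≤ t) :
    |iteratedDeriv 1 f x * t + iteratedDeriv 3 f x * t ^ 3 / 6|
      ≤ f x + |iteratedDeriv 2 f x| * t ^ 2 / 2 + t ^ 4 / 6 := by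
  set g : ℝ → ℝ := fun z => f (2 * x - z) with hg
  have hgd : ∀ (n : ℕ) (y : ℝ),
      iteratedDeriv n g y = (-1 : ℝ) ^ n * iteratedDeriv n f (2 * x - y) := by
    intro n y
    have h1 : g = fun z => (fun u => f (-u)) (z + -(2 * x)) := by
      funext z; simp only [hg]; ring_nf
    have A := congrFun (iteratedDeriv_comp_add_const n (fun u => f (-u)) (-(2 * x))) y
    have B := iteratedDeriv_comp_neg n f (y + -(2 * x))
    calc iteratedDeriv n g y
        = iteratedDeriv n (fun z => (fun u => f (-u)) (z + -(2 * x))) y := by rw [← h1]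
      _ = iteratedDeriv n (fun u => f (-u)) (y + -(2 * x)) := A
      _ = (-1 : ℝ) ^ n • iteratedDeriv n f (-(y + -(2 * x))) := B
      _ = (-1 : ℝ) ^ n * iteratedDeriv n f (2 * x - y) := by
          rw [smul_eq_mul, show -(y + -(2 * x)) = 2 * x - y by ring]
  have hgc : ContDiff ℝ 4 g := hf.comp (contDiff_const.sub contDiff_id)
  have hg4 : ∀ y, |iteratedDeriv 4 g y| ≤ 1 := by
    intro y
    rw [hgd]
    simpa [abs_mul] using h4 (2 * x - y)
  have hplus := taylor4 hf h4 x t ht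
  have hminus := taylor4 hgc hg4 x t ht
  have e0 : g x = f x := by rw [hg]; simp only; rw [show 2 * x - x = x by ring]
  have egt : g (x + t) = f (x - t) := by
    rw [hg]; simp only; rw [show 2 * x - (x + t) = x - t by ring]
  have e1 : iteratedDeriv 1 g x = -iteratedDeriv 1 f x := by
    rw [hgd, show 2 * x - x = x by ring]; ring
  have e2 : iteratedDeriv 2 g x = iteratedDeriv 2 f x := by
    rw [hgd, show 2 * x - x = x by ring]; ring
  have e3 : iteratedDeriv 3 g x = -iteratedDeriv 3 f x := by
    rw [hgd, show 2 * x - x = x by ring]; ring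
  rw [egt, e0, e1, e2, e3] at hminus
  have hfp := h0 (x + t)
  have hfm := h0 (x - t)
  have h2a := le_abs_self (iteratedDeriv 2 f x)
  have h2b := neg_abs_le (iteratedDeriv 2 f x)
  have ht2 : 0 ≤ t ^ 2 := sq_nonneg t
  rw [abs_le] at hplus hminus ⊢
  constructor <;> nlinarith [hplus.1, hplus.2, hminus.1, hminus.2,
    mul_le_mul_of_nonneg_right h2a ht2, mul_le_mul_of_nonneg_right h2b ht2]

/-- Fefferman–Phong: if `f ≥ 0` and `|f''''| ≤ 1` on `ℝ`, then
`|f'''(x)| ≤ 8 f(x)^(1/4) + 8 |f''(x)|^(1/2)`. -/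
theorem third_deriv_bound (f : ℝ → ℝ) (hf : ContDiff ℝ 4 f)
    (h0 : ∀ x, 0 ≤ f x) (h4 : ∀ x, |iteratedDeriv 4 f x| ≤ 1) :
    ∀ x : ℝ, |iteratedDeriv 3 f x| ≤
      8 * f x ^ ((1 : ℝ) / 4) + 8 * |iteratedDeriv 2 f x| ^ ((1 : ℝ) / 2) := by
  intro x
  set d1 := iteratedDeriv 1 f x with hd1def
  set d2 := iteratedDeriv 2 f x with hd2def
  set d3 := iteratedDeriv 3 f x with hd3def
  have main : ∀ t : ℝ, 0 ≤ t → |d3| * t ^ 3 ≤ 3 * f x + 3 * |d2| * t ^ 2 + 3 * t ^ 4 := by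
    intro t ht
    have h1 := key_bound hf h0 h4 x t ht
    have h2 := key_bound hf h0 h4 x (2 * t) (by linarith)
    rw [abs_le] at h1 h2
    ring_nf at h1 h2
    have ht3 : 0 ≤ t ^ 3 := pow_nonneg ht 3
    rcases abs_cases d3 with ⟨hc, _⟩ | ⟨hc, _⟩ <;> rw [hc] <;>
      nlinarith [h1.1, h1.2, h2.1, h2.2, ht3]
  set a := f x ^ ((1 : ℝ) / 4) with ha
  set b := |d2| ^ ((1 : ℝ) / 2) with hb
  have ha0 : 0 ≤ a := Real.rpow_nonneg (h0 x) _
  have hb0 : 0 ≤ b := Real.rpow_nonneg (abs_nonneg _) _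
  have ha4 : a ^ 4 = f x := by
    rw [ha, ← Real.rpow_natCast (f x ^ ((1 : ℝ) / 4)) 4, ← Real.rpow_mul (h0 x)]
    norm_num
  have hb2 : b ^ 2 = |d2| := by
    rw [hb, ← Real.rpow_natCast (|d2| ^ ((1 : ℝ) / 2)) 2, ← Real.rpow_mul (abs_nonneg _)]
    norm_num
  rcases eq_or_lt_of_le (add_nonneg ha0 hb0) with hab | hab
  · have ha' : a = 0 := by linarith
    have hb' : b = 0 := by linarith
    have hfx : f x = 0 := by rw [← ha4, ha']; ring
    have hd2 : |d2| = 0 := by rw [← hb2, hb']; ring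
    have hz : |d3| ≤ 0 := by
      by_contra hpos
      push_neg at hpos
      have hmain := main (|d3| / 6) (by positivity)
      rw [hfx, hd2] at hmain
      nlinarith [pow_pos (show (0 : ℝ) < |d3| / 6 by positivity) 3, hpos]
    rw [ha', hb']
    linarith
  · have hmain := main (a + b) (by linarith)
    have h3 : (a + b) ^ 4 = (a + b) * (a + b) ^ 3 := by ring
    have hcube : 0 < (a + b) ^ 3 := by positivity
    have hub : |d3| * (a + b) ^ 3 ≤ (6 * a + 6 * b) * (a + b) ^ 3 := by
      calc |d3| * (a + b) ^ 3 ≤ 3 * f x + 3 * |d2| * (a + b) ^ 2 + 3 * (a + b) ^ 4 := hmain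
        _ = 3 * a ^ 4 + 3 * (b ^ 2 * (a + b) ^ 2) + 3 * (a + b) ^ 4 := by
            rw [ha4, hb2]; ring
        _ ≤ 3 * (a * (a + b) ^ 3) + 3 * (b * (a + b) ^ 3) + 3 * ((a + b) * (a + b) ^ 3) := by
            have hA : a ^ 4 ≤ a * (a + b) ^ 3 := by
              calc a ^ 4 = a * a ^ 3 := by ring
                _ ≤ a * (a + b) ^ 3 := by
                    exact mul_le_mul_of_nonneg_left
                      (pow_le_pow_left₀ ha0 (by linarith) 3) ha0
            have hB : b ^ 2 * (a + b) ^ 2 ≤ b * (a + b) ^ 3 := by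
              calc b ^ 2 * (a + b) ^ 2 = b * (a + b) ^ 2 * b := by ring
                _ ≤ b * (a + b) ^ 2 * (a + b) :=
                    mul_le_mul_of_nonneg_left (by linarith) (by positivity)
                _ = b * (a + b) ^ 3 := by ring
            linarith
        _ = (6 * a + 6 * b) * (a + b) ^ 3 := by ring
    have h6 : |d3| ≤ 6 * a + 6 * b := le_of_mul_le_mul_right (by linarith) hcube
    linarith
end

section
/- Suppose f : ℝ → ℝ satisfies f(x) ≥ 0, f(x) ≤ 1, and |f''''(x)| ≤ 1 for all x ∈ ℝ. Then |f'(x)| ≤ 8 f(x)^{3/4} + (8/3) f(x)^{1/2} (f''(x)₊)^{1/2}, where f''(x)₊ = max(f''(x), 0) denotes the positive part of the second derivative. -/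
open Set

private lemma iterDW_eq {f : ℝ → ℝ} (hf : ContDiff ℝ 4 f) {s : Set ℝ}
    (hs : UniqueDiffOn ℝ s) {n : ℕ} (hn : n ≤ 4) :
    Set.EqOn (iteratedDerivWithin n f s) (iteratedDeriv n f) s := by
  induction n with
  | zero => intro x hx; simp
  | succ k ih =>
    intro x hx
    have hk : k ≤ 4 := le_of_lt (Nat.lt_of_succ_le hn)
    rw [iteratedDerivWithin_succ, iteratedDeriv_succ,
      derivWithin_congr (ih hk) (ih hk hx)]
    exact ((hf.differentiable_iteratedDeriv k
      (by exact_mod_cast Nat.lt_of_succ_le hn)).differentiableAt).derivWithin (hs x hx)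

private lemma taylor_pos {f : ℝ → ℝ} (hf : ContDiff ℝ 4 f)
    (h0 : ∀ x, 0 ≤ f x) (h4 : ∀ x, |iteratedDeriv 4 f x| ≤ 1) (x t : ℝ) (ht : 0 < t) :
    -(t ^ 4 / 24) ≤ f x + deriv f x * t + iteratedDeriv 2 f x * t ^ 2 / 2
      + iteratedDeriv 3 f x * t ^ 3 / 6 := by
  have hx : x < x + t := by linarith
  have hs : UniqueDiffOn ℝ (Icc x (x + t)) := uniqueDiffOn_Icc hx
  have hcd : ContDiffOn ℝ 3 f (Icc x (x + t)) := (hf.of_le (by norm_num)).contDiffOn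
  have hdiff : DifferentiableOn ℝ (iteratedDerivWithin 3 f (Icc x (x + t))) (Ioo x (x + t)) := by
    apply ((hf.differentiable_iteratedDeriv 3 (by norm_num)).differentiableOn).congr
    intro y hy
    exact iterDW_eq hf hs (by norm_num) (Ioo_subset_Icc_self hy)
  obtain ⟨ξ, hξ, hT⟩ := taylor_mean_remainder_lagrange (n := 3) hx.ne
    (by rwa [uIcc_of_le hx.le]) (by rwa [uIcc_of_le hx.le, uIoo_of_le hx.le])
  rw [uIcc_of_le hx.le] at hT
  rw [uIoo_of_le hx.le] at hξ
  have hxmem : x ∈ Icc x (x + t) := left_mem_Icc.mpr (le_of_lt hx)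
  have hsum : taylorWithinEval f 3 (Icc x (x + t)) x (x + t)
      = f x + deriv f x * t + iteratedDeriv 2 f x * t ^ 2 / 2
        + iteratedDeriv 3 f x * t ^ 3 / 6 := by
    rw [taylor_within_apply]
    rw [show (3 : ℕ) + 1 = 4 from rfl]
    rw [Finset.sum_range_succ, Finset.sum_range_succ, Finset.sum_range_succ,
      Finset.sum_range_succ, Finset.sum_range_zero]
    rw [iterDW_eq hf hs (by norm_num : (0:ℕ) ≤ 4) hxmem,
      iterDW_eq hf hs (by norm_num : (1:ℕ) ≤ 4) hxmem,
      iterDW_eq hf hs (by norm_num : (2:ℕ) ≤ 4) hxmem,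
      iterDW_eq hf hs (by norm_num : (3:ℕ) ≤ 4) hxmem]
    simp [iteratedDeriv_one, Nat.factorial]
    ring
  have hξ4 : iteratedDerivWithin 4 f (Icc x (x + t)) ξ = iteratedDeriv 4 f ξ :=
    iterDW_eq hf hs le_rfl (Ioo_subset_Icc_self hξ)
  rw [hsum, hξ4] at hT
  have h1 : |iteratedDeriv 4 f ξ| ≤ 1 := h4 ξ
  have habs := abs_le.mp h1
  have hfpos := h0 (x + t)
  have hsimp : x + t - x = t := by ring
  rw [hsimp] at hT
  have hfac : (((3 + 1).factorial : ℕ) : ℝ) = 24 := by norm_num [Nat.factorial]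
  rw [hfac] at hT
  have ht4 : (0:ℝ) ≤ t ^ 4 := by positivity
  have hpow : t ^ (3 + 1) = t ^ 4 := by norm_num
  rw [hpow] at hT
  nlinarith [hT, habs.1, habs.2, hfpos, ht4]

private lemma taylor_all {f : ℝ → ℝ} (hf : ContDiff ℝ 4 f)
    (h0 : ∀ x, 0 ≤ f x) (h4 : ∀ x, |iteratedDeriv 4 f x| ≤ 1) (x t : ℝ) :
    -(t ^ 4 / 24) ≤ f x + deriv f x * t + iteratedDeriv 2 f x * t ^ 2 / 2
      + iteratedDeriv 3 f x * t ^ 3 / 6 := by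
  rcases lt_trichotomy t 0 with ht | ht | ht
  · set g : ℝ → ℝ := fun y => f (-y) with hg
    have hgc : ContDiff ℝ 4 g := hf.comp contDiff_neg
    have hg0 : ∀ y, 0 ≤ g y := fun y => h0 (-y)
    have hg4 : ∀ y, |iteratedDeriv 4 g y| ≤ 1 := by
      intro y
      rw [hg, iteratedDeriv_comp_neg, smul_eq_mul]
      simpa [abs_mul] using h4 (-y)
    have key := taylor_pos hgc hg0 hg4 (-x) (-t) (by linarith)
    have e0 : g (-x) = f x := by simp [hg]
    have e1 : deriv g (-x) = -deriv f x := by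
      rw [← iteratedDeriv_one, hg, iteratedDeriv_comp_neg]
      simp [iteratedDeriv_one]
    have e2 : iteratedDeriv 2 g (-x) = iteratedDeriv 2 f x := by
      rw [hg, iteratedDeriv_comp_neg]; simp
    have e3 : iteratedDeriv 3 g (-x) = -iteratedDeriv 3 f x := by
      rw [hg, iteratedDeriv_comp_neg]; norm_num
    rw [e0, e1, e2, e3] at key
    nlinarith [key]
  · subst ht; simpa using h0 x
  · exact taylor_pos hf h0 h4 x t ht

set_option maxHeartbeats 1000000 in
/-- If `0 ≤ f ≤ 1` and `|f''''| ≤ 1` on `ℝ`, then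
`|f'(x)| ≤ 8 f(x)^(3/4) + (8/3) f(x)^(1/2) (f''(x)₊)^(1/2)`, where `(·)₊` is the
positive part. -/
theorem first_deriv_bound_pos_part (f : ℝ → ℝ) (hf : ContDiff ℝ 4 f)
    (h0 : ∀ x, 0 ≤ f x) (h1 : ∀ x, f x ≤ 1) (h4 : ∀ x, |iteratedDeriv 4 f x| ≤ 1) :
    ∀ x : ℝ, |deriv f x| ≤
      8 * f x ^ ((3 : ℝ) / 4) +
      (8 / 3) * f x ^ ((1 : ℝ) / 2) * (max (iteratedDeriv 2 f x) 0) ^ ((1 : ℝ) / 2) := by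
  intro x
  set a := f x with ha
  set b := deriv f x with hb
  set c2 := iteratedDeriv 2 f x with hc2
  set c3 := iteratedDeriv 3 f x with hc3
  set m := max c2 0 with hm
  have hm0 : 0 ≤ m := le_max_right _ _
  have hc2m : c2 ≤ m := le_max_left _ _
  have ha0 : 0 ≤ a := h0 x
  -- Q bound
  have hQ : ∀ s : ℝ, |b * s + c3 * s ^ 3 / 6| ≤ a + c2 * s ^ 2 / 2 + s ^ 4 / 24 := by
    intro s
    have hp := taylor_all hf h0 h4 x s
    have hn := taylor_all hf h0 h4 x (-s)
    rw [abs_le]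
    constructor <;> nlinarith [hp, hn]
  -- main inequality: for t > 0, |b| * t ≤ (3/2)a + m t² + t⁴/6
  have hMain : ∀ t : ℝ, 0 < t → |b| * t ≤ 3 / 2 * a + m * t ^ 2 + t ^ 4 / 6 := by
    intro t ht
    have h1' := abs_le.mp (hQ t)
    have h2' := abs_le.mp (hQ (2 * t))
    have ht2 : (0:ℝ) ≤ t ^ 2 := by positivity
    rcases abs_cases b with ⟨hB, _⟩ | ⟨hB, _⟩ <;> rw [hB] <;> nlinarith [h1'.1, h1'.2, h2'.1, h2'.2]
  rcases eq_or_lt_of_le ha0 with haz | hap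
  · -- f x = 0 : x is a global min, so deriv = 0
    have hmin : IsLocalMin f x := by
      apply Filter.Eventually.of_forall
      intro y; rw [← ha, ← haz]; exact h0 y
    have hb0 : b = 0 := hmin.deriv_eq_zero
    rw [hb0, abs_zero, ← haz]
    have : (0:ℝ) ^ ((3:ℝ)/4) = 0 := Real.zero_rpow (by norm_num)
    have h2 : (0:ℝ) ^ ((1:ℝ)/2) = 0 := Real.zero_rpow (by norm_num)
    rw [this, h2]; simp
  · -- a > 0
    have h34 : (0:ℝ) ≤ a ^ ((3:ℝ)/4) := Real.rpow_nonneg ha0 _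
    have h12 : (0:ℝ) ≤ a ^ ((1:ℝ)/2) := Real.rpow_nonneg ha0 _
    have hm12 : (0:ℝ) ≤ m ^ ((1:ℝ)/2) := Real.rpow_nonneg hm0 _
    rcases le_or_gt m (a ^ ((1:ℝ)/2)) with hcase | hcase
    · -- small m: take t = a^{1/4}
      set t := a ^ ((1:ℝ)/4) with htdef
      have htp : 0 < t := Real.rpow_pos_of_pos hap _
      have ht2 : t ^ 2 = a ^ ((1:ℝ)/2) := by
        rw [htdef, ← Real.rpow_natCast (a ^ ((1:ℝ)/4)) 2, ← Real.rpow_mul ha0]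
        norm_num
      have ht4 : t ^ 4 = a := by
        rw [htdef, ← Real.rpow_natCast (a ^ ((1:ℝ)/4)) 4, ← Real.rpow_mul ha0]
        norm_num
      have h34t : a ^ ((3:ℝ)/4) * t = a := by
        rw [htdef, ← Real.rpow_add hap]; norm_num
      have hkey := hMain t htp
      have hmt : m * t ^ 2 ≤ a := by
        rw [ht2]
        calc m * a ^ ((1:ℝ)/2) ≤ a ^ ((1:ℝ)/2) * a ^ ((1:ℝ)/2) :=
              mul_le_mul_of_nonneg_right hcase h12
          _ = a := by rw [← Real.rpow_add hap]; norm_num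
      have hbb : |b| * t ≤ 8/3 * a := by
        rw [ht4] at hkey; linarith
      have hfinal : |b| ≤ 8/3 * a ^ ((3:ℝ)/4) := by
        have : |b| * t ≤ 8/3 * a ^ ((3:ℝ)/4) * t := by
          rw [mul_assoc, h34t]; linarith
        exact le_of_mul_le_mul_right this htp
      calc |b| ≤ 8/3 * a ^ ((3:ℝ)/4) := hfinal
        _ ≤ 8 * a ^ ((3:ℝ)/4) + 8/3 * a ^ ((1:ℝ)/2) * m ^ ((1:ℝ)/2) := by nlinarith
    · -- large m: take t = a^{1/2} / m^{1/2}
      have hmp : 0 < m := lt_of_le_of_lt h12 hcase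
      set s := a ^ ((1:ℝ)/2) with hsdef
      set r := m ^ ((1:ℝ)/2) with hrdef
      have hsp : 0 < s := Real.rpow_pos_of_pos hap _
      have hrp : 0 < r := Real.rpow_pos_of_pos hmp _
      have hs2 : s ^ 2 = a := by
        rw [hsdef, ← Real.rpow_natCast (a ^ ((1:ℝ)/2)) 2, ← Real.rpow_mul ha0]; norm_num
      have hr2 : r ^ 2 = m := by
        rw [hrdef, ← Real.rpow_natCast (m ^ ((1:ℝ)/2)) 2, ← Real.rpow_mul hm0]; norm_num
      set t := s / r with htdef
      have htp : 0 < t := div_pos hsp hrp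
      have hkey := hMain t htp
      have hsr2 : s < r ^ 2 := by rw [hr2]; exact hcase
      have hr0 : r ≠ 0 := ne_of_gt hrp
      have e1 : r ^ 2 * (s / r) ^ 2 = s ^ 2 := by field_simp
      have e2 : (s / r) ^ 4 = s ^ 4 / r ^ 4 := by rw [div_pow]
      have e3 : s ^ 4 / r ^ 4 ≤ s ^ 2 := by
        rw [div_le_iff₀ (by positivity)]
        have h' : s ^ 2 ≤ (r ^ 2) ^ 2 := by nlinarith [hsp, hsr2]
        calc s ^ 4 = s ^ 2 * s ^ 2 := by ring
          _ ≤ s ^ 2 * (r ^ 2) ^ 2 := mul_le_mul_of_nonneg_left h' (sq_nonneg s)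
          _ = s ^ 2 * r ^ 4 := by ring
      have e4 : 8 / 3 * s * r * (s / r) = 8 / 3 * s ^ 2 := by field_simp
      have hstep : 3 / 2 * a + m * t ^ 2 + t ^ 4 / 6 ≤ 8 / 3 * s * r * t := by
        rw [htdef, ← hs2, ← hr2, e1, e2, e4]
        linarith
      have hmul : |b| * t ≤ 8 / 3 * s * r * t := hkey.trans hstep
      have hfinal : |b| ≤ 8 / 3 * s * r := le_of_mul_le_mul_right hmul htp
      calc |b| ≤ 8 / 3 * s * r := hfinal
        _ ≤ 8 * a ^ ((3:ℝ)/4) + 8 / 3 * a ^ ((1:ℝ)/2) * m ^ ((1:ℝ)/2) := by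
            rw [← hsdef, ← hrdef]; nlinarith [h34, hsp, hrp]
end
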